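/- Let P : C̃ → C together with ramification numbers e be a ramified covering of small categories, let x̃ be an object of C̃ and x = P(x̃). Then for every n ≥ 1, the map induced by P from N̄_n(C̃)^{x̃} to N̄_n(C)^{x} is e(x̃)-to-one: every chain in N̄_n(C)^{x} has exactly e(x̃) preimages in N̄_n(C̃)^{x̃}. -/

import Mathlib

open CategoryTheory

universe u

/-- The set of morphisms of `C` with target `x`, encoded as a sigma type. -/
abbrev Tgt (C : Type u) [SmallCategory C] (x : C) : Type u := Σ a : C, a ⟶ x

/-- The set of morphisms of `C` with source `x`, encoded as a sigma type. -/
abbrev Src (C : Type u) [SmallCategory C] (x : C) : Type u := Σ b : C, x ⟶ b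

/-- The map `T(xt) → T(P xt)` induced by a functor `P`. -/
def tgtMap {D C : Type u} [SmallCategory D] [SmallCategory C] (P : D ⥤ C) (x : D) :
    Tgt D x → Tgt C (P.obj x) := fun g => ⟨P.obj g.1, P.map g.2⟩

/-- The map `S(xt) → S(P xt)` induced by a functor `P`. -/
def srcMap {D C : Type u} [SmallCategory D] [SmallCategory C] (P : D ⥤ C) (x : D) :
    Src D x → Src C (P.obj x) := fun g => ⟨P.obj g.1, P.map g.2⟩

/-- `P : D ⥤ C` together with ramification numbers `e` is a ramified covering:
`C` is connected, `e x ≥ 1` for all `x`, `P : T(xt) → T(P xt)` is bijective,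
every morphism of `S̄(P xt)` has exactly `e xt` preimages in `S̄(xt)`, and
`e xt = 1` whenever `S̄(P xt)` is empty. -/
structure IsRamifiedCovering {D C : Type u} [SmallCategory D] [SmallCategory C]
    (P : D ⥤ C) (e : D → ℕ) : Prop where
  nonempty : Nonempty C
  zigzag : ∀ x y : C, Zigzag x y
  one_le : ∀ x : D, 1 ≤ e x
  tgt_bij : ∀ x : D, Function.Bijective (tgtMap P x)
  src_count : ∀ (x : D) (g : Src C (P.obj x)), g ≠ ⟨P.obj x, 𝟙 (P.obj x)⟩ →
    Nat.card {h : Src D x // h ≠ ⟨x, 𝟙 x⟩ ∧ srcMap P x h = g} = e x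
  ram_one : ∀ x : D, (∀ g : Src C (P.obj x), g = ⟨P.obj x, 𝟙 (P.obj x)⟩) → e x = 1


/-- A composable chain of `n` morphisms `x₀ → x₁ → ⋯ → xₙ` in `C`
(an element of `N_n(C)`). -/
structure Chain (C : Type u) [SmallCategory C] (n : ℕ) : Type u where
  obj : Fin (n + 1) → C
  map : ∀ i : Fin n, obj i.castSucc ⟶ obj i.succ

/-- A chain is non-degenerate if none of its morphisms is an identity
(an element of `N̄_n(C)`). -/
def Chain.NonDeg {C : Type u} [SmallCategory C] {n : ℕ} (c : Chain C n) : Prop :=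
  ∀ i : Fin n,
    (⟨c.obj i.succ, c.map i⟩ : Src C (c.obj i.castSucc)) ≠ ⟨c.obj i.castSucc, 𝟙 _⟩

/-- The image of a chain under a functor `P`. -/
def Chain.push {D C : Type u} [SmallCategory D] [SmallCategory C] (P : D ⥤ C) {n : ℕ}
    (c : Chain D n) : Chain C n :=
  ⟨fun i => P.obj (c.obj i), fun i => P.map (c.map i)⟩

/-- The constant identity chain `1_x` at an object `x`. -/
def Chain.const (C : Type u) [SmallCategory C] (x : C) (n : ℕ) : Chain C n :=
  ⟨fun _ => x, fun _ => 𝟙 x⟩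

section Helpers

variable {D C : Type u} [SmallCategory D] [SmallCategory C]

lemma src_mk_eq {x a b : C} (f : x ⟶ a) (g : x ⟶ b) (hab : a = b)
    (hfg : f ≫ eqToHom hab = g) : (⟨a, f⟩ : Src C x) = ⟨b, g⟩ := by
  subst hab; simp only [eqToHom_refl, Category.comp_id] at hfg; rw [hfg]

lemma src_mk_eq_elim {x a b : C} {f : x ⟶ a} {g : x ⟶ b}
    (h : (⟨a, f⟩ : Src C x) = ⟨b, g⟩) : ∃ hab : a = b, f ≫ eqToHom hab = g := by
  have h1 : a = b := congrArg Sigma.fst h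
  subst h1
  obtain ⟨-, h2⟩ := Sigma.mk.inj_iff.mp h
  exact ⟨rfl, by simpa using eq_of_heq h2⟩

lemma tgt_mk_eq {x a b : C} (f : a ⟶ x) (g : b ⟶ x) (hab : a = b)
    (hfg : f = eqToHom hab ≫ g) : (⟨a, f⟩ : Tgt C x) = ⟨b, g⟩ := by
  subst hab; simp only [eqToHom_refl, Category.id_comp] at hfg; rw [hfg]

lemma tgt_mk_eq_elim {x a b : C} {f : a ⟶ x} {g : b ⟶ x}
    (h : (⟨a, f⟩ : Tgt C x) = ⟨b, g⟩) : ∃ hab : a = b, f = eqToHom hab ≫ g := by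
  have h1 : a = b := congrArg Sigma.fst h
  subst h1
  obtain ⟨-, h2⟩ := Sigma.mk.inj_iff.mp h
  exact ⟨rfl, by simpa using eq_of_heq h2⟩

lemma srcMap_mk (P : D ⥤ C) (x : D) (b : D) (f : x ⟶ b) :
    srcMap P x ⟨b, f⟩ = ⟨P.obj b, P.map f⟩ := rfl

lemma srcMap_id (P : D ⥤ C) (x : D) :
    srcMap P x ⟨x, 𝟙 x⟩ = ⟨P.obj x, 𝟙 (P.obj x)⟩ := by
  simp [srcMap]

lemma src_transport_ne {x' x : C} (h : x' = x) {g : Src C x} (hg : g ≠ ⟨x, 𝟙 x⟩) :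
    (⟨g.1, eqToHom h ≫ g.2⟩ : Src C x') ≠ ⟨x', 𝟙 x'⟩ := by
  subst h; obtain ⟨a, f⟩ := g; simpa using hg

variable (P : D ⥤ C) (e : D → ℕ) (hcov : IsRamifiedCovering P e)
include hcov

lemma src_count' (x : D) (g : Src C (P.obj x)) (hg : g ≠ ⟨P.obj x, 𝟙 (P.obj x)⟩) :
    Nat.card {h : Src D x // srcMap P x h = g} = e x := by
  rw [← hcov.src_count x g hg]
  apply Nat.card_congr
  apply Equiv.subtypeEquivRight
  intro h
  constructor
  · intro hh
    refine ⟨fun hid => hg ?_, hh⟩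
    rw [← hh, hid, srcMap_id]
  · exact fun hh => hh.2

lemma lift_exists (x : D) (g : Src C (P.obj x)) (hg : g ≠ ⟨P.obj x, 𝟙 (P.obj x)⟩) :
    ∃ h : Src D x, srcMap P x h = g := by
  have hcard := src_count' P e hcov x g hg
  have hne : Nat.card {h : Src D x // srcMap P x h = g} ≠ 0 := by
    rw [hcard]; exact Nat.one_le_iff_ne_zero.mp (hcov.one_le x)
  obtain ⟨⟨h, hh⟩⟩ := (Nat.card_ne_zero.mp hne).1
  exact ⟨h, hh⟩

lemma lift_unique (x : D) (hx1 : e x = 1) (g : Src C (P.obj x))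
    (hg : g ≠ ⟨P.obj x, 𝟙 (P.obj x)⟩)
    {h₁ h₂ : Src D x} (e₁ : srcMap P x h₁ = g) (e₂ : srcMap P x h₂ = g) : h₁ = h₂ := by
  have hcard := src_count' P e hcov x g hg
  rw [hx1] at hcard
  have hs := (Nat.card_eq_one_iff_unique.mp hcard).1
  exact congrArg Subtype.val (@Subsingleton.elim _ hs ⟨h₁, e₁⟩ ⟨h₂, e₂⟩)

end Helpers

section LemmaA

variable {D C : Type u} [SmallCategory D] [SmallCategory C]

lemma tgtMap_mk (P : D ⥤ C) (x : D) (a : D) (f : a ⟶ x) :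
    tgtMap P x ⟨a, f⟩ = ⟨P.obj a, P.map f⟩ := rfl

variable (P : D ⥤ C) (e : D → ℕ) (hcov : IsRamifiedCovering P e)
include hcov

lemma e_eq_one_of_target {w x : D} (f : w ⟶ x)
    (hf : srcMap P w ⟨x, f⟩ ≠ ⟨P.obj w, 𝟙 (P.obj w)⟩) : e x = 1 := by
  classical
  by_cases hS : ∀ g : Src C (P.obj x), g = ⟨P.obj x, 𝟙 (P.obj x)⟩
  · exact hcov.ram_one x hS
  push_neg at hS
  obtain ⟨g', hg'⟩ := hS
  have hff : (⟨P.obj x, P.map f⟩ : Src C (P.obj w)) ≠ ⟨P.obj w, 𝟙 (P.obj w)⟩ := hf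
  set A : Type u := {a : Src D w // srcMap P w a = ⟨P.obj x, P.map f⟩} with hAdef
  have hyA : ∀ a : A, P.obj a.1.1 = P.obj x := fun a => congrArg Sigma.fst a.2
  set B : A → Type u := fun a =>
    {b : Src D a.1.1 // srcMap P a.1.1 b = ⟨g'.1, eqToHom (hyA a) ≫ g'.2⟩} with hBdef
  set L : Type u := {l : Src D w // srcMap P w l = ⟨g'.1, P.map f ≫ g'.2⟩} with hLdef
  have cardA : Nat.card A = e w := src_count' P e hcov w _ hff
  have cardB : ∀ a : A, Nat.card (B a) = e a.1.1 := fun a =>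
    src_count' P e hcov a.1.1 _ (src_transport_ne (hyA a) hg')
  -- the composition map is well defined
  have mem : ∀ p : Σ a : A, B a,
      srcMap P w ⟨p.2.1.1, p.1.1.2 ≫ p.2.1.2⟩ = ⟨g'.1, P.map f ≫ g'.2⟩ := by
    rintro ⟨⟨⟨y, f₀⟩, pa⟩, ⟨⟨z, f₁⟩, pb⟩⟩
    rw [srcMap_mk] at pa pb ⊢
    obtain ⟨h1, e1⟩ := src_mk_eq_elim pa
    obtain ⟨h2, e2⟩ := src_mk_eq_elim pb
    refine src_mk_eq _ _ h2 ?_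
    have he : P.map f ≫ g'.2 = (P.map f₀ ≫ eqToHom h1) ≫ g'.2 := by rw [e1]
    rw [P.map_comp, Category.assoc, e2, he, Category.assoc]
  -- the composition map is injective
  have Phi_inj : ∀ p q : Σ a : A, B a,
      (⟨p.2.1.1, p.1.1.2 ≫ p.2.1.2⟩ : Src D w) = ⟨q.2.1.1, q.1.1.2 ≫ q.2.1.2⟩ →
      p = q := by
    rintro ⟨⟨⟨y, f₀⟩, pa⟩, ⟨⟨z, f₁⟩, pb⟩⟩ ⟨⟨⟨y', f₀'⟩, pa'⟩, ⟨⟨z', f₁'⟩, pb'⟩⟩ hval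
    have hz : z = z' := congrArg Sigma.fst hval
    subst hz
    rw [srcMap_mk] at pa pa' pb pb'
    obtain ⟨h1, e1⟩ := src_mk_eq_elim pa
    obtain ⟨h1', e1'⟩ := src_mk_eq_elim pa'
    obtain ⟨h2, e2⟩ := src_mk_eq_elim pb
    obtain ⟨h2', e2'⟩ := src_mk_eq_elim pb'
    have hf₁ : (⟨y, f₁⟩ : Tgt D z) = ⟨y', f₁'⟩ := by
      apply (hcov.tgt_bij z).1
      rw [tgtMap_mk, tgtMap_mk]
      refine tgt_mk_eq _ _ (h1.trans h1'.symm) ?_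
      have q1 : P.map f₁ = eqToHom (hyA ⟨⟨y, f₀⟩, pa⟩) ≫ g'.2 ≫ eqToHom h2.symm := by
        calc P.map f₁ = (P.map f₁ ≫ eqToHom h2) ≫ eqToHom h2.symm := by
              simp [eqToHom_trans]
          _ = _ := by rw [e2]; simp
      have q2 : P.map f₁' = eqToHom (hyA ⟨⟨y', f₀'⟩, pa'⟩) ≫ g'.2 ≫ eqToHom h2'.symm := by
        calc P.map f₁' = (P.map f₁' ≫ eqToHom h2') ≫ eqToHom h2'.symm := by
              simp [eqToHom_trans]
          _ = _ := by rw [e2']; simp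
      rw [q1, q2]
      simp only [Category.assoc, eqToHom_trans, eqToHom_trans_assoc]
    have hy : y = y' := congrArg Sigma.fst hf₁
    subst hy
    have hf₁' : f₁ = f₁' := eq_of_heq (Sigma.mk.inj_iff.mp hf₁).2
    subst hf₁'
    have hPf₀ : P.map f₀ = P.map f₀' := by
      have := e1.trans e1'.symm
      exact (cancel_mono (eqToHom h1)).1 this
    have hf₀ : (⟨w, f₀⟩ : Tgt D y) = ⟨w, f₀'⟩ := by
      apply (hcov.tgt_bij y).1
      rw [tgtMap_mk, tgtMap_mk, hPf₀]
    have hf₀' : f₀ = f₀' := eq_of_heq (Sigma.mk.inj_iff.mp hf₀).2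
    subst hf₀'
    rfl
  -- a choice of an element in each fiber B a
  have bne : ∀ a : A, Nonempty (B a) := by
    intro a
    have hne : Nat.card (B a) ≠ 0 := by
      rw [cardB a]; exact Nat.one_le_iff_ne_zero.mp (hcov.one_le _)
    exact (Nat.card_ne_zero.mp hne).1
  let ch : ∀ a : A, B a := fun a => (bne a).some
  let Phi : (Σ a : A, B a) → L := fun p => ⟨⟨p.2.1.1, p.1.1.2 ≫ p.2.1.2⟩, mem p⟩
  have PhiInj : Function.Injective Phi := fun p q hh =>
    Phi_inj p q (congrArg Subtype.val hh)
  let F : A → L := fun a => Phi ⟨a, ch a⟩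
  have Finj : Function.Injective F := by
    intro a a' hh
    have := PhiInj hh
    exact congrArg Sigma.fst this
  -- the cardinality of L
  have hcard : Nat.card L ≠ 0 ∧ Nat.card A = Nat.card L := by
    by_cases hid : (⟨g'.1, P.map f ≫ g'.2⟩ : Src C (P.obj w)) = ⟨P.obj w, 𝟙 (P.obj w)⟩
    · -- the composite is an identity : L is a singleton
      have hLall : ∀ l : L, l.1 = ⟨w, 𝟙 w⟩ := by
        rintro ⟨⟨z, k⟩, pl⟩
        rw [srcMap_mk] at pl
        replace pl := pl.trans hid
        obtain ⟨hzw, ek⟩ := src_mk_eq_elim pl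
        have hk : (⟨w, k⟩ : Tgt D z) = ⟨z, 𝟙 z⟩ := by
          apply (hcov.tgt_bij z).1
          rw [tgtMap_mk, tgtMap_mk, P.map_id]
          refine tgt_mk_eq _ _ hzw.symm ?_
          rw [Category.comp_id]
          calc P.map k = (P.map k ≫ eqToHom hzw) ≫ eqToHom hzw.symm := by
                simp [eqToHom_trans]
            _ = eqToHom hzw.symm := by rw [ek]; simp
        have hwz : w = z := congrArg Sigma.fst hk
        subst hwz
        have : k = 𝟙 w := eq_of_heq (Sigma.mk.inj_iff.mp hk).2
        show (⟨w, k⟩ : Src D w) = ⟨w, 𝟙 w⟩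
        rw [this]
      have hLne : Nonempty L := ⟨⟨⟨w, 𝟙 w⟩, by rw [srcMap_id]; exact hid.symm⟩⟩
      have cardL : Nat.card L = 1 := Nat.card_eq_one_iff_unique.mpr
        ⟨⟨fun l l' => Subtype.ext ((hLall l).trans (hLall l').symm)⟩, hLne⟩
      refine ⟨by rw [cardL]; exact one_ne_zero, ?_⟩
      haveI : Finite L := Nat.finite_of_card_ne_zero (by rw [cardL]; exact one_ne_zero)
      have hle : Nat.card A ≤ Nat.card L := Nat.card_le_card_of_injective F Finj
      rw [cardL] at hle ⊢
      rw [cardA] at hle ⊢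
      exact le_antisymm hle (hcov.one_le w)
    · have cardL : Nat.card L = e w := src_count' P e hcov w _ hid
      refine ⟨by rw [cardL]; exact Nat.one_le_iff_ne_zero.mp (hcov.one_le w), ?_⟩
      rw [cardA, cardL]
  haveI finL : Finite L := Nat.finite_of_card_ne_zero hcard.1
  have Fbij : Function.Bijective F := (Nat.bijective_iff_injective_and_card F).mpr
    ⟨Finj, hcard.2⟩
  -- the distinguished lift a₀ of P f, with target x
  let a₀ : A := ⟨⟨x, f⟩, rfl⟩
  have hBsub : ∀ b : B a₀, b = ch a₀ := by
    intro b
    obtain ⟨a, ha⟩ := Fbij.2 (Phi ⟨a₀, b⟩)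
    have h2 := PhiInj ha
    have ha0 : a = a₀ := congrArg Sigma.fst h2
    subst ha0
    exact (eq_of_heq (Sigma.mk.inj_iff.mp h2).2).symm
  have hB1 : Nat.card (B a₀) = 1 := Nat.card_eq_one_iff_unique.mpr
    ⟨⟨fun b b' => (hBsub b).trans (hBsub b').symm⟩, bne a₀⟩
  exact ((cardB a₀).symm.trans hB1 : e x = 1)

end LemmaA

section Chains

variable {D C : Type u} [SmallCategory D] [SmallCategory C]

lemma Chain.ext' {n : ℕ} {a b : Chain C n} (ho : ∀ i, a.obj i = b.obj i)
    (hm : ∀ j : Fin n, a.map j ≫ eqToHom (ho j.succ) = eqToHom (ho j.castSucc) ≫ b.map j) :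
    a = b := by
  obtain ⟨ao, am⟩ := a
  obtain ⟨bo, bm⟩ := b
  have hO : ao = bo := funext ho
  subst hO
  have hM : am = bm := by
    funext j
    have := hm j
    simpa using this
  rw [hM]

lemma push_obj (P : D ⥤ C) {n : ℕ} {c' : Chain D n} {c : Chain C n}
    (h : c'.push P = c) (i : Fin (n + 1)) : P.obj (c'.obj i) = c.obj i :=
  congrFun (congrArg Chain.obj h) i

lemma push_map (P : D ⥤ C) {n : ℕ} {c' : Chain D n} {c : Chain C n}
    (h : c'.push P = c) (j : Fin n) :
    P.map (c'.map j) ≫ eqToHom (push_obj P h j.succ) =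
      eqToHom (push_obj P h j.castSucc) ≫ c.map j := by
  subst h
  simp [Chain.push]
  exact (Category.id_comp _).symm

lemma lift_edge_ne_id (P : D ⥤ C) {n : ℕ} {c' : Chain D n} {c : Chain C n}
    (hp : c'.push P = c) (hc : c.NonDeg) (j : Fin n) :
    srcMap P (c'.obj j.castSucc) ⟨c'.obj j.succ, c'.map j⟩ ≠
      ⟨P.obj (c'.obj j.castSucc), 𝟙 _⟩ := by
  subst hp
  intro hEq
  rw [srcMap_mk] at hEq
  exact hc j hEq

lemma nondeg_of_push (P : D ⥤ C) {n : ℕ} {c' : Chain D n} {c : Chain C n}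
    (hp : c'.push P = c) (hc : c.NonDeg) : c'.NonDeg := by
  subst hp
  intro j hEq
  apply hc j
  obtain ⟨h1, e1⟩ := src_mk_eq_elim hEq
  show (⟨P.obj (c'.obj j.succ), P.map (c'.map j)⟩ : Src C (P.obj (c'.obj j.castSucc))) = _
  refine src_mk_eq _ _ (congrArg P.obj h1) ?_
  have := congrArg P.map e1
  rw [P.map_comp, eqToHom_map, P.map_id] at this
  exact this

/-- A lift of the `j`-th edge of the chain `c`. -/
def EdgeLift (P : D ⥤ C) {n : ℕ} (c : Chain C n) (j : Fin n) (w y : D) (f : w ⟶ y) : Prop :=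
  ∃ (hw : P.obj w = c.obj j.castSucc) (hy : P.obj y = c.obj j.succ),
    P.map f ≫ eqToHom hy = eqToHom hw ≫ c.map j

/-- A recursively chosen lift of the whole chain `c`, starting with a chosen lift
of the first edge. -/
noncomputable def seqA (P : D ⥤ C) (e : D → ℕ) (hcov : IsRamifiedCovering P e)
    {n : ℕ} (c : Chain C n) (hc : c.NonDeg) (xt : D)
    (s0 : Σ' (y : D) (f : xt ⟶ y), ∀ h0 : 0 < n, EdgeLift P c ⟨0, h0⟩ xt y f) :
    (i : ℕ) → Σ' (w y : D) (f : w ⟶ y), ∀ hi : i < n, EdgeLift P c ⟨i, hi⟩ w y f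
  | 0 => ⟨xt, s0.1, s0.2.1, s0.2.2⟩
  | (i + 1) =>
    let prev := seqA P e hcov c hc xt s0 i
    ⟨prev.2.1,
      if hi : i + 1 < n then
        have hi' : i < n := Nat.lt_of_succ_lt hi
        have hyy : P.obj prev.2.1 = c.obj (Fin.castSucc ⟨i + 1, hi⟩) := by
          obtain ⟨hw, hy, -⟩ := prev.2.2.2 hi'
          exact hy
        have hne : (⟨c.obj (Fin.succ ⟨i + 1, hi⟩),
              eqToHom hyy ≫ c.map ⟨i + 1, hi⟩⟩ : Src C (P.obj prev.2.1)) ≠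
            ⟨P.obj prev.2.1, 𝟙 _⟩ :=
          src_transport_ne hyy (hc ⟨i + 1, hi⟩)
        let l := Classical.choose (lift_exists P e hcov prev.2.1 _ hne)
        have hl : srcMap P prev.2.1 l = ⟨c.obj (Fin.succ ⟨i + 1, hi⟩),
            eqToHom hyy ≫ c.map ⟨i + 1, hi⟩⟩ :=
          Classical.choose_spec (lift_exists P e hcov prev.2.1 _ hne)
        ⟨l.1, l.2, fun _ => ⟨hyy, (src_mk_eq_elim hl).choose, (src_mk_eq_elim hl).choose_spec⟩⟩
      else ⟨prev.2.1, 𝟙 prev.2.1, fun hcon => absurd hcon hi⟩⟩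

end Chains

/-- For a ramified covering `P`, an object `xt` over `x` and `n ≥ 1`,
the induced map `N̄_n(C̃)^{xt} → N̄_n(C)^{x}` is `e(xt)`-to-one: every non-degenerate
chain starting at `x` has exactly `e(xt)` non-degenerate lifts starting at `xt`. -/
theorem ramifiedCovering_nonDeg_chain_count {D C : Type u} [SmallCategory D] [SmallCategory C]
    (P : D ⥤ C) (e : D → ℕ) (h : IsRamifiedCovering P e) (xt : D)
    (n : ℕ) (hn : 1 ≤ n) (c : Chain C n) (hc : c.NonDeg) (hx : c.obj 0 = P.obj xt) :
    Nat.card {c' : Chain D n // c'.NonDeg ∧ c'.obj 0 = xt ∧ c'.push P = c} = e xt := by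
  classical
  set i₀ : Fin n := ⟨0, hn⟩ with hi₀def
  have hx0 : P.obj xt = c.obj i₀.castSucc := hx.symm
  have hg₀ : (⟨c.obj i₀.succ, eqToHom hx0 ≫ c.map i₀⟩ : Src C (P.obj xt)) ≠
      ⟨P.obj xt, 𝟙 (P.obj xt)⟩ := src_transport_ne hx0 (hc i₀)
  have hSF : Nat.card {h' : Src D xt // srcMap P xt h' =
      ⟨c.obj i₀.succ, eqToHom hx0 ≫ c.map i₀⟩} = e xt := src_count' P e h xt _ hg₀
  rw [← hSF]
  have E1 : {c' : Chain D n // c'.NonDeg ∧ c'.obj 0 = xt ∧ c'.push P = c} ≃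
      {c' : Chain D n // c'.obj 0 = xt ∧ c'.push P = c} :=
    Equiv.subtypeEquivRight
      (fun c' => ⟨fun hh => hh.2, fun hh => ⟨nondeg_of_push P hh.2 hc, hh⟩⟩)
  rw [Nat.card_congr E1]
  have Fmem : ∀ p : {c' : Chain D n // c'.obj 0 = xt ∧ c'.push P = c},
      srcMap P xt ⟨p.1.obj i₀.succ,
        eqToHom (show p.1.obj i₀.castSucc = xt from p.2.1).symm ≫ p.1.map i₀⟩ =
      ⟨c.obj i₀.succ, eqToHom hx0 ≫ c.map i₀⟩ := by
    rintro ⟨c', h0, hp⟩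
    rw [srcMap_mk]
    refine src_mk_eq _ _ (push_obj P hp i₀.succ) ?_
    rw [P.map_comp, eqToHom_map, Category.assoc, push_map P hp i₀, eqToHom_trans_assoc]
  apply Nat.card_congr
  refine Equiv.ofBijective (fun p =>
    ⟨⟨p.1.obj i₀.succ,
      eqToHom (show p.1.obj i₀.castSucc = xt from p.2.1).symm ≫ p.1.map i₀⟩, Fmem p⟩)
    ⟨?_, ?_⟩
  · -- injectivity
    intro p q hpq
    obtain ⟨c₁, h01, hp1⟩ := p
    obtain ⟨c₂, h02, hp2⟩ := q
    have hval : (⟨c₁.obj i₀.succ,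
        eqToHom (show c₁.obj i₀.castSucc = xt from h01).symm ≫ c₁.map i₀⟩ : Src D xt) =
        ⟨c₂.obj i₀.succ,
        eqToHom (show c₂.obj i₀.castSucc = xt from h02).symm ≫ c₂.map i₀⟩ :=
      congrArg Subtype.val hpq
    have step : ∀ (j : Fin n) (hobj : c₁.obj j.castSucc = c₂.obj j.castSucc),
        (⟨c₁.obj j.succ, c₁.map j⟩ : Src D (c₁.obj j.castSucc)) =
          ⟨c₂.obj j.succ, eqToHom hobj ≫ c₂.map j⟩ := by
      intro j hobj
      rcases Nat.eq_zero_or_pos j.val with hj0 | hjpos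
      · -- the first edge
        have hji : j = i₀ := Fin.ext hj0
        subst hji
        obtain ⟨hab, heq⟩ := src_mk_eq_elim hval
        refine src_mk_eq _ _ hab ?_
        have e01 : c₁.obj i₀.castSucc = xt := h01
        have e02 : c₂.obj i₀.castSucc = xt := h02
        have heq' : (eqToHom e01.symm ≫ c₁.map i₀) ≫ eqToHom hab =
            eqToHom e02.symm ≫ c₂.map i₀ := heq
        calc c₁.map i₀ ≫ eqToHom hab
            = eqToHom e01 ≫ ((eqToHom e01.symm ≫ c₁.map i₀) ≫ eqToHom hab) := by
              simp
          _ = eqToHom e01 ≫ eqToHom e02.symm ≫ c₂.map i₀ := by rw [heq']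
          _ = eqToHom hobj ≫ c₂.map i₀ := by rw [eqToHom_trans_assoc]
      · -- a later edge : unique lifting
        have hjm : j.val - 1 < n := by omega
        have he1 : e (c₁.obj j.castSucc) = 1 := by
          have hne := lift_edge_ne_id P hp1 hc ⟨j.val - 1, hjm⟩
          have h2 := e_eq_one_of_target P e h (c₁.map ⟨j.val - 1, hjm⟩) hne
          have hsucc : (⟨j.val - 1, hjm⟩ : Fin n).succ = j.castSucc := by
            ext
            simp only [Fin.val_succ, Fin.coe_castSucc]
            omega
          rwa [hsucc] at h2
        have hgj : (⟨c.obj j.succ, eqToHom (push_obj P hp1 j.castSucc) ≫ c.map j⟩ :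
            Src C (P.obj (c₁.obj j.castSucc))) ≠ ⟨P.obj (c₁.obj j.castSucc), 𝟙 _⟩ :=
          src_transport_ne _ (hc j)
        refine lift_unique P e h (c₁.obj j.castSucc) he1 _ hgj ?_ ?_
        · rw [srcMap_mk]
          exact src_mk_eq _ _ (push_obj P hp1 j.succ) (push_map P hp1 j)
        · rw [srcMap_mk]
          refine src_mk_eq _ _ (push_obj P hp2 j.succ) ?_
          rw [P.map_comp, eqToHom_map, Category.assoc, push_map P hp2 j, eqToHom_trans_assoc]
    have obj_eq : ∀ i : Fin (n + 1), c₁.obj i = c₂.obj i := by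
      intro i
      obtain ⟨iv, hiv⟩ := i
      induction iv with
      | zero => exact (h01.trans h02.symm : c₁.obj ⟨0, hiv⟩ = c₂.obj ⟨0, hiv⟩)
      | succ m ih =>
        have hm : m < n := by omega
        have hobj : c₁.obj (Fin.castSucc ⟨m, hm⟩) = c₂.obj (Fin.castSucc ⟨m, hm⟩) :=
          ih (by omega)
        exact (congrArg Sigma.fst (step ⟨m, hm⟩ hobj) :
          c₁.obj ⟨m + 1, hiv⟩ = c₂.obj ⟨m + 1, hiv⟩)
    have map_eq : ∀ j : Fin n,
        c₁.map j ≫ eqToHom (obj_eq j.succ) = eqToHom (obj_eq j.castSucc) ≫ c₂.map j := by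
      intro j
      obtain ⟨hab, heq⟩ := src_mk_eq_elim (step j (obj_eq j.castSucc))
      exact heq
    exact Subtype.ext (Chain.ext' obj_eq map_eq)
  · -- surjectivity
    rintro ⟨⟨y₀, f₀⟩, hs0⟩
    rw [srcMap_mk] at hs0
    obtain ⟨hab0, heq0⟩ := src_mk_eq_elim hs0
    set s0 : Σ' (y : D) (f : xt ⟶ y), ∀ h0 : 0 < n, EdgeLift P c ⟨0, h0⟩ xt y f :=
      ⟨y₀, f₀, fun h0 => ⟨hx0, hab0, heq0⟩⟩ with hs0def
    set S := fun i => seqA P e h c hc xt s0 i with hSdef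
    set W : ℕ → D := fun i => (S i).1 with hWdef
    set Y : ℕ → D := fun i => (S i).2.1 with hYdef
    set co : Fin (n + 1) → D :=
      (fun k => if k.val = 0 then xt else Y (k.val - 1)) with hcodef
    have eW : ∀ j : Fin n, co j.castSucc = W j.val := by
      intro j
      show (if j.val = 0 then xt else Y (j.val - 1)) = W j.val
      rcases Nat.eq_zero_or_pos j.val with h0 | hpos
      · rw [if_pos h0, h0]
        rfl
      · rw [if_neg (by omega)]
        calc Y (j.val - 1) = W (j.val - 1 + 1) := rfl
          _ = W j.val := by rw [Nat.sub_add_cancel hpos]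
    have eY : ∀ j : Fin n, co j.succ = Y j.val := by
      intro j
      show (if j.val + 1 = 0 then xt else Y (j.val + 1 - 1)) = Y j.val
      rw [if_neg (Nat.succ_ne_zero _)]
      simp only [Nat.add_sub_cancel]
    set c' : Chain D n :=
      ⟨co, fun j => eqToHom (eW j) ≫ (S j.val).2.2.1 ≫ eqToHom (eY j).symm⟩ with hc'def
    have hobj : ∀ i : Fin (n + 1), P.obj (c'.obj i) = c.obj i := by
      intro i
      obtain ⟨iv, hiv⟩ := i
      induction iv with
      | zero =>
        show P.obj (if (0 : ℕ) = 0 then xt else Y (0 - 1)) = c.obj ⟨0, hiv⟩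
        rw [if_pos rfl]
        exact hx.symm
      | succ m _ =>
        have hm : m < n := by omega
        obtain ⟨hw, hy, -⟩ := (S m).2.2.2 hm
        show P.obj (if m + 1 = 0 then xt else Y (m + 1 - 1)) = c.obj ⟨m + 1, hiv⟩
        rw [if_neg (Nat.succ_ne_zero m)]
        simp only [Nat.add_sub_cancel]
        exact hy
    have hmap : ∀ j : Fin n,
        P.map (c'.map j) ≫ eqToHom (hobj j.succ) = eqToHom (hobj j.castSucc) ≫ c.map j := by
      intro j
      obtain ⟨hw, hy, heq⟩ := (S j.val).2.2.2 j.isLt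
      have heq2 : ∀ q : P.obj (Y j.val) = c.obj j.succ,
          P.map (S j.val).2.2.1 ≫ eqToHom q = eqToHom hw ≫ c.map j := fun q => heq
      show P.map (eqToHom (eW j) ≫ (S j.val).2.2.1 ≫ eqToHom (eY j).symm) ≫
          eqToHom (hobj j.succ) = _
      rw [P.map_comp, P.map_comp, eqToHom_map, eqToHom_map, Category.assoc, Category.assoc,
        eqToHom_trans, heq2, eqToHom_trans_assoc]
    have hpush : c'.push P = c := Chain.ext' hobj hmap
    have h0' : c'.obj 0 = xt := by
      show (if (0 : Fin (n + 1)).val = 0 then xt else Y ((0 : Fin (n + 1)).val - 1)) = xt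
      rw [if_pos (show ((0 : Fin (n + 1)).val = 0) from rfl)]
    refine ⟨⟨c', h0', hpush⟩, ?_⟩
    apply Subtype.ext
    show (⟨c'.obj i₀.succ,
        eqToHom (show c'.obj i₀.castSucc = xt from h0').symm ≫ c'.map i₀⟩ : Src D xt) =
      ⟨y₀, f₀⟩
    have hfst : c'.obj i₀.succ = y₀ := eY i₀
    refine Sigma.mk.inj_iff.mpr ⟨hfst, ?_⟩
    show HEq (eqToHom (show c'.obj i₀.castSucc = xt from h0').symm ≫
      eqToHom (eW i₀) ≫ (S (i₀ : ℕ)).2.2.1 ≫ eqToHom (eY i₀).symm) f₀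
    simp only [eqToHom_comp_heq_iff, comp_eqToHom_heq_iff]
    exact HEq.rfl
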